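/- For any ordered 4-tuple (q₁,q₂,q₃,q₄) of distinct points in counterclockwise order on the unit circle, there exists a unique β with |β| < 1 such that the hyperbolic geodesic in the Poincaré disk joining q₁ to q₃ and the geodesic joining q₂ to q₄ intersect at the point -β; equivalently, g_{-β} maps the tuple into the core (g_{-β}(q₁) = -g_{-β}(q₃) and g_{-β}(q₂) = -g_{-β}(q₄)). -/

import Mathlib

open Complex

/-- The special Möbius transformation `g_β`. -/
noncomputable def moebius (β z : ℂ) : ℂ := (z - β) / (1 - (starRingEnd ℂ) β * z)

lemma one_add_ne_zero_of_abs_lt {w : ℂ} (h : ‖w‖ < 1) : (1 : ℂ) + w ≠ 0 := by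
  intro h0
  have : w = -1 := by linear_combination h0
  rw [this] at h
  simp at h

lemma moebius_antipodal_iff (β z z' : ℂ) (hβ : ‖β‖ < 1)
    (hz : ‖z‖ = 1) (hz' : ‖z'‖ = 1) :
    moebius (-β) z = -(moebius (-β) z') ↔
      (z + β) * (1 + (starRingEnd ℂ) β * z') + (z' + β) * (1 + (starRingEnd ℂ) β * z) = 0 := by
  have hd : ∀ u : ℂ, ‖u‖ = 1 → (1 : ℂ) + (starRingEnd ℂ) β * u ≠ 0 := by
    intro u hu
    apply one_add_ne_zero_of_abs_lt
    rw [norm_mul, Complex.norm_conj, hu, mul_one]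
    exact hβ
  unfold moebius
  simp only [map_neg, sub_neg_eq_add, neg_mul]
  rw [neg_div', div_eq_div_iff (hd z hz) (hd z' hz')]
  constructor
  · intro h; linear_combination h
  · intro h; linear_combination h

lemma key_iff (x y θ θ' σ d : ℝ) (hθ : θ = σ - d) (hθ' : θ' = σ + d) :
    ((Complex.exp ((θ : ℂ) * I) + ((x : ℂ) + (y : ℂ) * I)) *
        (1 + (starRingEnd ℂ) ((x : ℂ) + (y : ℂ) * I) * Complex.exp ((θ' : ℂ) * I)) +
      (Complex.exp ((θ' : ℂ) * I) + ((x : ℂ) + (y : ℂ) * I)) *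
        (1 + (starRingEnd ℂ) ((x : ℂ) + (y : ℂ) * I) * Complex.exp ((θ : ℂ) * I)) = 0)
    ↔ Real.cos d * (1 + x ^ 2 + y ^ 2) + 2 * (x * Real.cos σ + y * Real.sin σ) = 0 := by
  subst hθ hθ'
  set CS := Complex.cos (σ : ℂ) with hCS
  set SS := Complex.sin (σ : ℂ) with hSS
  set CD := Complex.cos (d : ℂ) with hCD
  set SD := Complex.sin (d : ℂ) with hSD
  have e1 : Complex.exp (((σ - d : ℝ) : ℂ) * I) = (CS + SS * I) * (CD - SD * I) := by
    rw [show (((σ - d : ℝ)) : ℂ) * I = (σ : ℂ) * I + (-(d : ℂ)) * I by push_cast; ring,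
      Complex.exp_add, Complex.exp_mul_I, Complex.exp_mul_I, Complex.cos_neg, Complex.sin_neg]
    ring
  have e2 : Complex.exp (((σ + d : ℝ) : ℂ) * I) = (CS + SS * I) * (CD + SD * I) := by
    rw [show (((σ + d : ℝ)) : ℂ) * I = (σ : ℂ) * I + (d : ℂ) * I by push_cast; ring,
      Complex.exp_add, Complex.exp_mul_I, Complex.exp_mul_I]
  have hconj : (starRingEnd ℂ) ((x : ℂ) + (y : ℂ) * I) = (x : ℂ) - (y : ℂ) * I := by
    rw [map_add, map_mul, Complex.conj_ofReal, Complex.conj_ofReal, Complex.conj_I]; ring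
  rw [e1, e2, hconj]
  have hI : (I : ℂ) ^ 2 = -1 := Complex.I_sq
  have hg2 : CD ^ 2 + SD ^ 2 = 1 := Complex.cos_sq_add_sin_sq _
  have hg3 : CS ^ 2 + SS ^ 2 = 1 := Complex.cos_sq_add_sin_sq _
  have main :
      ((CS + SS * I) * (CD - SD * I) + ((x : ℂ) + (y : ℂ) * I)) *
        (1 + ((x : ℂ) - (y : ℂ) * I) * ((CS + SS * I) * (CD + SD * I))) +
      ((CS + SS * I) * (CD + SD * I) + ((x : ℂ) + (y : ℂ) * I)) *
        (1 + ((x : ℂ) - (y : ℂ) * I) * ((CS + SS * I) * (CD - SD * I)))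
      = 2 * (CS + SS * I) *
          ((Real.cos d * (1 + x ^ 2 + y ^ 2) + 2 * (x * Real.cos σ + y * Real.sin σ) : ℝ) : ℂ) := by
    push_cast
    rw [← hCS, ← hSS, ← hCD]
    linear_combination
      (-2*SS*CD*(y:ℂ)^2*I - 2*SS^2*SD^2*(y:ℂ)*I + 2*SS^2*SD^2*(y:ℂ)*I^3 + 2*SS^2*SD^2*(x:ℂ)
        - 2*SS^2*SD^2*(x:ℂ)*I^2 - 2*SS^2*CD^2*(y:ℂ)*I + 2*SS^2*CD^2*(x:ℂ) - 2*CS*CD*(y:ℂ)^2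
        - 4*CS*SS*SD^2*(y:ℂ) + 4*CS*SS*SD^2*(y:ℂ)*I^2 - 4*CS*SS*SD^2*(x:ℂ)*I
        - 4*CS*SS*CD^2*(y:ℂ) + 2*CS^2*SD^2*(y:ℂ)*I - 2*CS^2*SD^2*(x:ℂ)) * hI +
      (2*SS^2*(y:ℂ)*I - 2*SS^2*(x:ℂ) + 4*CS*SS*(y:ℂ) + 4*CS*SS*(x:ℂ)*I - 2*CS^2*(y:ℂ)*I
        + 2*CS^2*(x:ℂ)) * hg2 +
      (-2*(y:ℂ)*I - 2*(x:ℂ)) * hg3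
  rw [main, mul_eq_zero, mul_eq_zero]
  have hu : CS + SS * I ≠ 0 := by
    intro h0
    have h1 : (CS + SS * I) * (CS - SS * I) = 1 := by
      linear_combination hg3 - SS ^ 2 * hI
    rw [h0, zero_mul] at h1
    exact one_ne_zero h1.symm
  simp only [hu, false_or, OfNat.ofNat_ne_zero, or_false]
  norm_cast

lemma cond_iff_real (q₁ : ℂ) (hq₁ : ‖q₁‖ = 1) (x y θ θ' σ d : ℝ)
    (hθ : θ = σ - d) (hθ' : θ' = σ + d)
    (hxy : ‖(x : ℂ) + (y : ℂ) * I‖ < 1) :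
    moebius (-(q₁ * ((x : ℂ) + (y : ℂ) * I))) (q₁ * Complex.exp ((θ : ℂ) * I))
      = -(moebius (-(q₁ * ((x : ℂ) + (y : ℂ) * I))) (q₁ * Complex.exp ((θ' : ℂ) * I)))
    ↔ Real.cos d * (1 + x ^ 2 + y ^ 2) + 2 * (x * Real.cos σ + y * Real.sin σ) = 0 := by
  have hq0 : q₁ ≠ 0 := by
    intro h; rw [h] at hq₁; simp at hq₁
  have habsexp : ∀ a : ℝ, ‖q₁ * Complex.exp ((a : ℂ) * I)‖ = 1 := by
    intro a
    rw [norm_mul, hq₁, Complex.norm_exp_ofReal_mul_I, mul_one]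
  have habsβ : ‖q₁ * ((x : ℂ) + (y : ℂ) * I)‖ < 1 := by
    rw [norm_mul, hq₁, one_mul]; exact hxy
  rw [moebius_antipodal_iff _ _ _ habsβ (habsexp θ) (habsexp θ')]
  rw [← key_iff x y θ θ' σ d hθ hθ']
  have hc : (starRingEnd ℂ) q₁ * q₁ = 1 := by
    rw [mul_comm, Complex.mul_conj, Complex.normSq_eq_norm_sq, hq₁]; norm_num
  set γ : ℂ := (x : ℂ) + (y : ℂ) * I with hγ
  set E : ℂ := Complex.exp ((θ : ℂ) * I) with hE
  set E' : ℂ := Complex.exp ((θ' : ℂ) * I) with hE'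
  have key : (q₁ * E + q₁ * γ) * (1 + (starRingEnd ℂ) (q₁ * γ) * (q₁ * E'))
      + (q₁ * E' + q₁ * γ) * (1 + (starRingEnd ℂ) (q₁ * γ) * (q₁ * E))
      = q₁ * ((E + γ) * (1 + (starRingEnd ℂ) γ * E') + (E' + γ) * (1 + (starRingEnd ℂ) γ * E)) := by
    rw [map_mul]
    linear_combination (q₁ * (E + γ) * (starRingEnd ℂ) γ * E'
      + q₁ * (E' + γ) * (starRingEnd ℂ) γ * E) * hc
  rw [key, mul_eq_zero]
  simp [hq0]

lemma quad_solution (N Dsq : ℝ) (hN0 : 0 ≤ N) (hND : N < Dsq) :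
    ∃ t : ℝ, 0 ≤ t ∧ t < 1 ∧ N * (1 + t)^2 = 4 * Dsq * t := by
  have hD : 0 < Dsq := lt_of_le_of_lt hN0 hND
  set P : ℝ := 4 * Dsq - 2 * N with hP
  have hPpos : 0 < P := by nlinarith
  have hdisc : 0 ≤ P^2 - 4 * N^2 := by nlinarith
  set S : ℝ := Real.sqrt (P^2 - 4*N^2) with hS
  have hS0 : 0 ≤ S := Real.sqrt_nonneg _
  have hSsq : S^2 = P^2 - 4*N^2 := Real.sq_sqrt hdisc
  have hden : 0 < P + S := by linarith
  refine ⟨2 * N / (P + S), by positivity, ?_, ?_⟩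
  · rw [div_lt_one hden]; nlinarith
  · have key : N * ((P + S) + 2 * N)^2 = 4 * Dsq * (2 * N) * (P + S) := by
      linear_combination N * hSsq + 2 * N * (P + S) * hP
    refine mul_right_cancel₀ (pow_ne_zero 2 (ne_of_gt hden)) ?_
    have e1 : (1 + 2*N/(P+S)) * (P+S) = (P+S) + 2*N := by field_simp
    have e2 : 2*N/(P+S) * (P+S) = 2*N := by field_simp
    calc N * (1 + 2*N/(P+S))^2 * (P+S)^2 = N * ((1 + 2*N/(P+S)) * (P+S))^2 := by ring
      _ = N * ((P+S) + 2*N)^2 := by rw [e1]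
      _ = 4 * Dsq * (2*N) * (P+S) := key
      _ = 4 * Dsq * (2*N/(P+S) * (P+S)) * (P+S) := by rw [e2]
      _ = 4 * Dsq * (2*N/(P+S)) * (P+S)^2 := by ring

lemma quad_unique (N Dsq t t' : ℝ) (hN0 : 0 ≤ N) (hND : N < Dsq)
    (ht0 : 0 ≤ t) (ht1 : t < 1) (ht'0 : 0 ≤ t') (ht'1 : t' < 1)
    (he : N * (1 + t)^2 = 4 * Dsq * t) (he' : N * (1 + t')^2 = 4 * Dsq * t') :
    t = t' := by
  have hfac : (t - t') * (N * (2 + t + t') - 4 * Dsq) = 0 := by linear_combination he - he'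
  have h2 : N * (2 + t + t') - 4 * Dsq < 0 := by nlinarith
  rcases mul_eq_zero.1 hfac with h | h
  · linarith [sub_eq_zero.1 h]
  · linarith

lemma real_core (c1 s1 cs ss cD : ℝ)
    (hD : 0 < ss * c1 - cs * s1)
    (hN : (cD * s1 - c1 * ss)^2 + (c1 * cs - cD * c1)^2 < (ss * c1 - cs * s1)^2) :
    ∃! p : ℝ × ℝ, p.1^2 + p.2^2 < 1 ∧
      c1 * (1 + p.1^2 + p.2^2) + 2 * (p.1 * c1 + p.2 * s1) = 0 ∧
      cD * (1 + p.1^2 + p.2^2) + 2 * (p.1 * cs + p.2 * ss) = 0 := by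
  have hN0 : (0:ℝ) ≤ (cD * s1 - c1 * ss)^2 + (c1 * cs - cD * c1)^2 := by positivity
  obtain ⟨t, ht0, ht1, hteq⟩ := quad_solution _ _ hN0 hN
  have hDne : ss * c1 - cs * s1 ≠ 0 := ne_of_gt hD
  have h2Dne : 2 * (ss * c1 - cs * s1) ≠ 0 := by positivity
  set x0 : ℝ := (cD * s1 - c1 * ss) * (1 + t) / (2 * (ss * c1 - cs * s1)) with hx0
  set y0 : ℝ := (c1 * cs - cD * c1) * (1 + t) / (2 * (ss * c1 - cs * s1)) with hy0
  have hx0' : 2 * (ss * c1 - cs * s1) * x0 = (cD * s1 - c1 * ss) * (1 + t) := by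
    rw [hx0]; field_simp
  have hy0' : 2 * (ss * c1 - cs * s1) * y0 = (c1 * cs - cD * c1) * (1 + t) := by
    rw [hy0]; field_simp
  have hxy : x0^2 + y0^2 = t := by
    have h4 : (2 * (ss * c1 - cs * s1))^2 * (x0^2 + y0^2) = (2 * (ss * c1 - cs * s1))^2 * t := by
      linear_combination (2 * (ss * c1 - cs * s1) * x0 + (cD * s1 - c1 * ss) * (1 + t)) * hx0'
        + (2 * (ss * c1 - cs * s1) * y0 + (c1 * cs - cD * c1) * (1 + t)) * hy0' + hteq
    exact mul_left_cancel₀ (by positivity) h4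
  refine ⟨(x0, y0), ⟨by simpa [hxy] using ht1, ?_, ?_⟩, ?_⟩
  · show c1 * (1 + x0^2 + y0^2) + 2 * (x0 * c1 + y0 * s1) = 0
    have h1 : 2 * (ss * c1 - cs * s1) * (c1 * (1 + x0^2 + y0^2) + 2 * (x0 * c1 + y0 * s1)) = 0 := by
      linear_combination (2 * (ss * c1 - cs * s1) * c1) * hxy + 2 * c1 * hx0' + 2 * s1 * hy0'
    exact (mul_eq_zero.1 h1).resolve_left h2Dne
  · show cD * (1 + x0^2 + y0^2) + 2 * (x0 * cs + y0 * ss) = 0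
    have h1 : 2 * (ss * c1 - cs * s1) * (cD * (1 + x0^2 + y0^2) + 2 * (x0 * cs + y0 * ss)) = 0 := by
      linear_combination (2 * (ss * c1 - cs * s1) * cD) * hxy + 2 * cs * hx0' + 2 * ss * hy0'
    exact (mul_eq_zero.1 h1).resolve_left h2Dne
  · rintro ⟨x, y⟩ ⟨hlt, hF1, hF2⟩
    simp only at hlt hF1 hF2
    have ht'0 : 0 ≤ x^2 + y^2 := by positivity
    have hx' : 2 * (ss * c1 - cs * s1) * x = (cD * s1 - c1 * ss) * (1 + (x^2 + y^2)) := by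
      linear_combination ss * hF1 - s1 * hF2
    have hy' : 2 * (ss * c1 - cs * s1) * y = (c1 * cs - cD * c1) * (1 + (x^2 + y^2)) := by
      linear_combination (-cs) * hF1 + c1 * hF2
    have ht'eq : ((cD * s1 - c1 * ss)^2 + (c1 * cs - cD * c1)^2) * (1 + (x^2 + y^2))^2
        = 4 * (ss * c1 - cs * s1)^2 * (x^2 + y^2) := by
      linear_combination (-(2 * (ss * c1 - cs * s1) * x + (cD * s1 - c1 * ss) * (1 + (x^2 + y^2)))) * hx'
        - (2 * (ss * c1 - cs * s1) * y + (c1 * cs - cD * c1) * (1 + (x^2 + y^2))) * hy'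
    have htt : x^2 + y^2 = t := quad_unique _ _ _ _ hN0 hN ht'0 hlt ht0 ht1 ht'eq hteq
    rw [htt] at hx' hy'
    have hxx : x = x0 := mul_left_cancel₀ h2Dne (by rw [hx0']; exact hx')
    have hyy : y = y0 := mul_left_cancel₀ h2Dne (by rw [hy0']; exact hy')
    exact Prod.ext hxx hyy

lemma trig_ineq (θ₂ θ₃ θ₄ : ℝ) (h2 : 0 < θ₂) (h23 : θ₂ < θ₃) (h34 : θ₃ < θ₄)
    (h4 : θ₄ < 2 * Real.pi) :
    (Real.cos ((θ₄-θ₂)/2) * Real.sin (θ₃/2) - Real.cos (θ₃/2) * Real.sin ((θ₂+θ₄)/2))^2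
      + (Real.cos (θ₃/2) * Real.cos ((θ₂+θ₄)/2) - Real.cos ((θ₄-θ₂)/2) * Real.cos (θ₃/2))^2
      < (Real.sin ((θ₂+θ₄)/2) * Real.cos (θ₃/2) - Real.cos ((θ₂+θ₄)/2) * Real.sin (θ₃/2))^2 := by
  have hπ : 0 < Real.pi := Real.pi_pos
  set A : ℝ := θ₃/2 with hA
  set B : ℝ := (θ₄-θ₂)/2 with hB
  set σ : ℝ := (θ₂+θ₄)/2 with hσ
  set δ : ℝ := σ - A with hδ
  have hδ0 : 0 < δ := by rw [hδ, hσ, hA]; linarith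
  have hδπ : δ < Real.pi := by rw [hδ, hσ, hA]; linarith
  have hsinδ : Real.sin δ = Real.sin σ * Real.cos A - Real.cos σ * Real.sin A := Real.sin_sub σ A
  have hcosδ : Real.cos δ = Real.cos σ * Real.cos A + Real.sin σ * Real.sin A := Real.cos_sub σ A
  have hhigh : Real.cos δ < Real.cos A * Real.cos B + Real.sin A * Real.sin B := by
    rw [← Real.cos_sub]
    rcases le_total A B with hAB | hAB
    · have heq : Real.cos (A - B) = Real.cos (B - A) := by rw [← Real.cos_neg]; ring_nf
      rw [heq]
      apply Real.cos_lt_cos_of_nonneg_of_le_pi (by linarith) (le_of_lt hδπ)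
      rw [hδ, hσ, hA, hB]; linarith
    · apply Real.cos_lt_cos_of_nonneg_of_le_pi (by linarith) (le_of_lt hδπ)
      rw [hδ, hσ, hA, hB]; linarith
  have hlow : Real.cos A * Real.cos B - Real.sin A * Real.sin B < Real.cos δ := by
    rw [← Real.cos_add]
    rcases le_or_gt (A + B) Real.pi with hABπ | hABπ
    · apply Real.cos_lt_cos_of_nonneg_of_le_pi (le_of_lt hδ0) hABπ
      rw [hδ, hσ, hA, hB]; linarith
    · have heq : Real.cos (A + B) = Real.cos (2 * Real.pi - (A + B)) :=
        (Real.cos_two_pi_sub (A + B)).symm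
      rw [heq]
      apply Real.cos_lt_cos_of_nonneg_of_le_pi (le_of_lt hδ0) (by linarith)
      rw [hδ, hσ, hA, hB]; linarith
  have p1 : Real.sin A ^ 2 + Real.cos A ^ 2 = 1 := Real.sin_sq_add_cos_sq A
  have p2 : Real.sin σ ^ 2 + Real.cos σ ^ 2 = 1 := Real.sin_sq_add_cos_sq σ
  have p3 : Real.sin B ^ 2 + Real.cos B ^ 2 = 1 := Real.sin_sq_add_cos_sq B
  have hΔsq : (Real.sin σ * Real.cos A - Real.cos σ * Real.sin A)^2
      = 1 - (Real.cos σ * Real.cos A + Real.sin σ * Real.sin A)^2 := by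
    have h := Real.sin_sq_add_cos_sq δ
    rw [hsinδ, hcosδ] at h
    linarith
  have key : 0 < (Real.sin A * Real.sin B
        - (Real.cos σ * Real.cos A + Real.sin σ * Real.sin A - Real.cos A * Real.cos B))
      * (Real.sin A * Real.sin B
        + (Real.cos σ * Real.cos A + Real.sin σ * Real.sin A - Real.cos A * Real.cos B)) :=
    mul_pos (by rw [hcosδ] at hhigh; linarith) (by rw [hcosδ] at hlow; linarith)
  nlinarith [key, p1, p2, p3, hΔsq]

/-- For any 4 distinct points in counterclockwise order on the unit circle,
there is a unique `β` in the open unit disk such that `g_{-β}` carries the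
tuple into the core (opposite points antipodal). -/
theorem exists_unique_moebius_to_core
    (q₁ q₂ q₃ q₄ : ℂ) (θ₂ θ₃ θ₄ : ℝ)
    (hq₁ : ‖q₁‖ = 1)
    (h2 : 0 < θ₂) (h23 : θ₂ < θ₃) (h34 : θ₃ < θ₄) (h4 : θ₄ < 2 * Real.pi)
    (hq₂ : q₂ = q₁ * Complex.exp (θ₂ * Complex.I))
    (hq₃ : q₃ = q₁ * Complex.exp (θ₃ * Complex.I))
    (hq₄ : q₄ = q₁ * Complex.exp (θ₄ * Complex.I)) :
    ∃! β : ℂ, ‖β‖ < 1 ∧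
      moebius (-β) q₁ = -(moebius (-β) q₃) ∧
      moebius (-β) q₂ = -(moebius (-β) q₄) := by
  subst hq₂ hq₃ hq₄
  have hq0 : q₁ ≠ 0 := by
    intro h; rw [h] at hq₁; simp at hq₁
  have hD : 0 < Real.sin ((θ₂+θ₄)/2) * Real.cos (θ₃/2)
      - Real.cos ((θ₂+θ₄)/2) * Real.sin (θ₃/2) := by
    have h0 : 0 < (θ₂+θ₄-θ₃)/2 := by linarith
    have h1 : (θ₂+θ₄-θ₃)/2 < Real.pi := by linarith
    have := Real.sin_pos_of_pos_of_lt_pi h0 h1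
    rwa [show (θ₂+θ₄-θ₃)/2 = (θ₂+θ₄)/2 - θ₃/2 by ring, Real.sin_sub] at this
  have hN := trig_ineq θ₂ θ₃ θ₄ h2 h23 h34 h4
  obtain ⟨⟨x0, y0⟩, ⟨hlt, hF1, hF2⟩, huniq⟩ := real_core (Real.cos (θ₃/2)) (Real.sin (θ₃/2))
    (Real.cos ((θ₂+θ₄)/2)) (Real.sin ((θ₂+θ₄)/2)) (Real.cos ((θ₄-θ₂)/2)) hD hN
  simp only at hlt hF1 hF2
  have absiff : ∀ a b : ℝ, ‖(a : ℂ) + (b : ℂ) * I‖ < 1 ↔ a^2 + b^2 < 1 := by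
    intro a b
    have h := Complex.sq_norm ((a : ℂ) + (b : ℂ) * I)
    rw [Complex.normSq_add_mul_I] at h
    constructor <;> intro hh <;>
      nlinarith [norm_nonneg ((a : ℂ) + (b : ℂ) * I)]
  have e0 : q₁ * Complex.exp (((0:ℝ) : ℂ) * I) = q₁ := by norm_num
  have habs0 : ‖(x0 : ℂ) + (y0 : ℂ) * I‖ < 1 := (absiff x0 y0).2 hlt
  refine ⟨q₁ * ((x0 : ℂ) + (y0 : ℂ) * I), ⟨?_, ?_, ?_⟩, ?_⟩
  · rw [norm_mul, hq₁, one_mul]; exact habs0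
  · have h1 := (cond_iff_real q₁ hq₁ x0 y0 0 θ₃ (θ₃/2) (θ₃/2) (by ring) (by ring) habs0).2 hF1
    rwa [e0] at h1
  · exact (cond_iff_real q₁ hq₁ x0 y0 θ₂ θ₄ ((θ₂+θ₄)/2) ((θ₄-θ₂)/2)
      (by ring) (by ring) habs0).2 hF2
  · rintro b ⟨hb, hb1, hb2⟩
    have hbdecomp : b = q₁ * (((b/q₁).re : ℂ) + ((b/q₁).im : ℂ) * I) := by
      rw [Complex.re_add_im]; field_simp
    have habs' : ‖((b/q₁).re : ℂ) + ((b/q₁).im : ℂ) * I‖ < 1 := by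
      rw [Complex.re_add_im, norm_div, hq₁, div_one]; exact hb
    rw [hbdecomp] at hb1 hb2
    have hb1' : moebius (-(q₁ * (((b/q₁).re : ℂ) + ((b/q₁).im : ℂ) * I)))
        (q₁ * Complex.exp (((0:ℝ) : ℂ) * I))
        = -(moebius (-(q₁ * (((b/q₁).re : ℂ) + ((b/q₁).im : ℂ) * I)))
          (q₁ * Complex.exp ((θ₃ : ℂ) * I))) := by
      rw [e0]; exact hb1
    have hG1 := (cond_iff_real q₁ hq₁ (b/q₁).re (b/q₁).im 0 θ₃ (θ₃/2) (θ₃/2)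
      (by ring) (by ring) habs').1 hb1'
    have hG2 := (cond_iff_real q₁ hq₁ (b/q₁).re (b/q₁).im θ₂ θ₄ ((θ₂+θ₄)/2) ((θ₄-θ₂)/2)
      (by ring) (by ring) habs').1 hb2
    have hpq := huniq ((b/q₁).re, (b/q₁).im) ⟨(absiff _ _).1 habs', hG1, hG2⟩
    have hx := congrArg Prod.fst hpq
    have hy := congrArg Prod.snd hpq
    simp only at hx hy
    rw [hbdecomp, hx, hy]
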